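/- Let Γ be a countable discrete group and (X,μ) a standard probability space. For all measure-preserving actions a, b, c of Γ on (X,μ) and all t ∈ [0,1]: d(t a + (1−t) c, t b + (1−t) c) ≤ t·d(a,b), and likewise d_s(t a + (1−t) c, t b + (1−t) c) ≤ t·d_s(a,b). -/

import Mathlib

open MeasureTheory Filter Topology Set

/-- A measure-preserving action of a group `Γ` on a measure space `(X, μ)`. -/
structure MPAction (Γ : Type*) [Group Γ] (X : Type*) [MeasurableSpace X]
    (μ : MeasureTheory.Measure X) where
  act : Γ → X → X
  measurePreserving_act : ∀ γ : Γ, MeasureTheory.MeasurePreserving (act γ) μ μ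
  act_one : ∀ x, act 1 x = x
  act_mul : ∀ γ δ x, act (γ * δ) x = act γ (act δ x)

namespace MPAction

variable {Γ : Type*} [Group Γ] {X : Type*} [MeasurableSpace X] {μ : Measure X}
  {Y : Type*} [MeasurableSpace Y] {ν : Measure Y}
  {W : Type*} [MeasurableSpace W] {ρ : Measure W}

/-- Weak containment of measure-preserving actions. -/
def WeaklyContained (a : MPAction Γ X μ) (b : MPAction Γ Y ν) : Prop :=
  ∀ (n : ℕ) (A : Fin n → Set X), (∀ i, MeasurableSet (A i)) →
    ∀ (F : Finset Γ) (ε : ℝ), 0 < ε →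
      ∃ B : Fin n → Set Y, (∀ i, MeasurableSet (B i)) ∧
        ∀ γ ∈ F, ∀ i j : Fin n,
          |(μ (a.act γ '' A i ∩ A j)).toReal - (ν (b.act γ '' B i ∩ B j)).toReal| < ε

/-- Weak equivalence of measure-preserving actions. -/
def WeakEquiv (a : MPAction Γ X μ) (b : MPAction Γ Y ν) : Prop :=
  WeaklyContained a b ∧ WeaklyContained b a

/-- A finite measurable partition of the space. -/
def IsPartition {k : ℕ} (A : Fin k → Set X) : Prop :=
  (∀ i, MeasurableSet (A i)) ∧ Pairwise (Function.onFun Disjoint A) ∧ (⋃ i, A i) = Set.univ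

/-- The compact set `C_{n,k}(a) ⊆ [0,1]^{n × k × k}`: the closure of the collection of
matrices of measures `μ(γ_p^a A_q ∩ A_r)` over all measurable `k`-partitions, with respect
to the fixed enumeration `e` of the group. -/
noncomputable def Cnk (e : ℕ → Γ) (a : MPAction Γ X μ) (n k : ℕ) :
    Set ((Fin n × Fin k × Fin k) → ℝ) :=
  closure { v | ∃ A : Fin k → Set X, IsPartition A ∧
    ∀ (p : Fin n) (q r : Fin k), v (p, q, r) = (μ (a.act (e p.1) '' A q ∩ A r)).toReal }

/-- The metric `d` on weak equivalence classes:
`d(a,b) = Σ_{n,k} 2^{-(n+k)} d_H(C_{n,k}(a), C_{n,k}(b))`. -/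
noncomputable def dWE (e : ℕ → Γ) (a : MPAction Γ X μ) (b : MPAction Γ Y ν) : ℝ :=
  ∑' nk : ℕ × ℕ, (2 : ℝ) ^ (-(nk.1 : ℤ) - (nk.2 : ℤ)) *
    Metric.hausdorffDist (Cnk e a nk.1 nk.2) (Cnk e b nk.1 nk.2)

section Mix

variable {ι : Type*} {Z : ι → Type*} [∀ i, MeasurableSpace (Z i)]

theorem measurable_sigmaMk' (i : ι) : Measurable (@Sigma.mk ι Z i) :=
  measurable_iff_le_map.2 (iInf_le _ i)

theorem measurable_of_sigma {δ : Type*} [MeasurableSpace δ] {f : Sigma Z → δ}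
    (hf : ∀ i, Measurable (f ∘ Sigma.mk i)) : Measurable f := by
  intro s hs
  rw [Sigma.instMeasurableSpace, MeasurableSpace.measurableSet_iInf]
  intro i
  exact hf i hs

/-- The measure `Σ_i λ_i ν_i` on the disjoint union `⊔_i Z_i`. -/
noncomputable def mixMeasure (lam : ι → ℝ) (νs : ∀ i, Measure (Z i)) :
    Measure ((i : ι) × Z i) :=
  Measure.sum fun i => ENNReal.ofReal (lam i) • (νs i).map (Sigma.mk i)

instance mixMeasure.instSFinite [Countable ι] (lam : ι → ℝ) (νs : ∀ i, Measure (Z i))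
    [∀ i, SFinite (νs i)] : SFinite (mixMeasure lam νs) := by
  unfold mixMeasure
  infer_instance

/-- The convex combination `Σ_i λ_i a_i` of measure-preserving actions, acting on the
disjoint union `⊔_i Z_i` with the measure `Σ_i λ_i ν_i`. -/
noncomputable def mix [Countable ι] {νs : ∀ i, Measure (Z i)} (lam : ι → ℝ)
    (a : ∀ i, MPAction Γ (Z i) (νs i)) : MPAction Γ ((i : ι) × Z i) (mixMeasure lam νs) where
  act γ p := ⟨p.1, (a p.1).act γ p.2⟩
  measurePreserving_act γ := by
    have hmeas : Measurable fun p : (i : ι) × Z i => (⟨p.1, (a p.1).act γ p.2⟩ : (i : ι) × Z i) := by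
      apply measurable_of_sigma
      intro i
      exact (measurable_sigmaMk' i).comp ((a i).measurePreserving_act γ).measurable
    refine ⟨hmeas, ?_⟩
    refine Measure.ext fun s hs => ?_
    rw [Measure.map_apply hmeas hs]
    rw [mixMeasure, Measure.sum_apply _ (hmeas hs), Measure.sum_apply _ hs]
    congr 1
    funext i
    rw [Measure.smul_apply, Measure.smul_apply,
      Measure.map_apply (measurable_sigmaMk' i) (hmeas hs),
      Measure.map_apply (measurable_sigmaMk' i) hs]
    congr 1
    have hpre : (Sigma.mk i) ⁻¹'
        ((fun p : (i : ι) × Z i => (⟨p.1, (a p.1).act γ p.2⟩ : (i : ι) × Z i)) ⁻¹' s)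
        = ((a i).act γ) ⁻¹' (Sigma.mk i ⁻¹' s) := rfl
    rw [hpre]
    exact ((a i).measurePreserving_act γ).measure_preimage
      ((measurable_sigmaMk' i) hs).nullMeasurableSet
  act_one p := by
    cases p with
    | mk i x => simp only [(a i).act_one]
  act_mul γ δ p := by
    cases p with
    | mk i x => simp only [(a i).act_mul]

end Mix

/-- The binary convex combination `t a + (1 - t) b` of two actions on `(X, μ)`,
realized on the disjoint union of two copies of `X` carrying measures `tμ` and `(1-t)μ`. -/
noncomputable def convComb (t : ℝ) (a b : MPAction Γ X μ) :
    MPAction Γ ((_ : Fin 2) × X) (mixMeasure ![t, 1 - t] fun _ => μ) :=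
  mix (νs := fun _ => μ) ![t, 1 - t] ![a, b]

/-- The trivial action. -/
def trivAction (Γ : Type*) [Group Γ] (Y : Type*) [MeasurableSpace Y] (ν : Measure Y) :
    MPAction Γ Y ν where
  act _ y := y
  measurePreserving_act _ := MeasurePreserving.id ν
  act_one _ := rfl
  act_mul _ _ _ := rfl

/-- The product of two measure-preserving actions. -/
noncomputable def prodAction [SFinite μ] [SFinite ν] (a : MPAction Γ X μ) (b : MPAction Γ Y ν) :
    MPAction Γ (X × Y) (μ.prod ν) where
  act γ := Prod.map (a.act γ) (b.act γ)
  measurePreserving_act γ := (a.measurePreserving_act γ).prod (b.measurePreserving_act γ)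
  act_one p := by simp [Prod.map, a.act_one, b.act_one]
  act_mul γ δ p := by simp [Prod.map, a.act_mul, b.act_mul]

/-- Stable weak containment: `a ≺_s b` iff `a ≺ ι × b`, where `ι` is the trivial action of `Γ`
on the standard probability space `(X₀, μ₀)`. -/
def StableWeaklyContained {X₀ : Type*} [MeasurableSpace X₀] (μ₀ : Measure X₀) [SFinite μ₀]
    (a : MPAction Γ W ρ) (b : MPAction Γ Y ν) [SFinite ν] : Prop :=
  WeaklyContained a (prodAction (trivAction Γ X₀ μ₀) b)

/-- Stable weak equivalence. -/
def StableWeakEquiv {X₀ : Type*} [MeasurableSpace X₀] (μ₀ : Measure X₀) [SFinite μ₀]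
    (a : MPAction Γ W ρ) [SFinite ρ] (b : MPAction Γ Y ν) [SFinite ν] : Prop :=
  StableWeaklyContained μ₀ a b ∧ StableWeaklyContained μ₀ b a

/-- An action is ergodic if every strictly invariant measurable set is null or conull. -/
def IsErgodicAction (a : MPAction Γ X μ) : Prop :=
  ∀ A : Set X, MeasurableSet A → (∀ γ, a.act γ ⁻¹' A = A) → μ A = 0 ∨ μ Aᶜ = 0

/-- An action is (essentially) free if almost every point has trivial stabilizer. -/
def IsFreeAction (a : MPAction Γ X μ) : Prop :=
  ∀ᵐ x ∂μ, ∀ γ : Γ, γ ≠ 1 → a.act γ x ≠ x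

end MPAction

namespace MPAction

/-- The metric `d_s` on stable weak equivalence classes: `d_s(a,b) = d(a × ι, b × ι)`, where
`ι` is the trivial action of `Γ` on the standard probability space `(X₀,μ₀)`. -/
noncomputable def dS {Γ : Type*} [Group Γ] {X₀ : Type*} [MeasurableSpace X₀]
    (μ₀ : Measure X₀) [SFinite μ₀] (e : ℕ → Γ)
    {W : Type*} [MeasurableSpace W] {ρ : Measure W} [SFinite ρ]
    {Y : Type*} [MeasurableSpace Y] {ν : Measure Y} [SFinite ν]
    (a : MPAction Γ W ρ) (b : MPAction Γ Y ν) : ℝ :=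
  dWE e (prodAction a (trivAction Γ X₀ μ₀)) (prodAction b (trivAction Γ X₀ μ₀))

end MPAction

section AuxProof

open Metric Bornology

namespace MPAction

variable {Γ : Type*} [Group Γ] {X : Type*} [MeasurableSpace X] {μ : Measure X}

lemma act_image_eq_preimage (a : MPAction Γ X μ) (γ : Γ) (A : Set X) :
    a.act γ '' A = a.act γ⁻¹ ⁻¹' A := by
  ext x
  simp only [Set.mem_image, Set.mem_preimage]
  constructor
  · rintro ⟨y, hy, rfl⟩
    have h : a.act γ⁻¹ (a.act γ y) = y := by
      rw [← a.act_mul, inv_mul_cancel, a.act_one]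
    rwa [h]
  · intro hx
    refine ⟨a.act γ⁻¹ x, hx, ?_⟩
    rw [← a.act_mul, mul_inv_cancel, a.act_one]

lemma measurableSet_act_image (a : MPAction Γ X μ) (γ : Γ) {A : Set X}
    (hA : MeasurableSet A) : MeasurableSet (a.act γ '' A) := by
  rw [act_image_eq_preimage]
  exact (a.measurePreserving_act γ⁻¹).measurable hA

/-- The vector of measures attached to a partition. -/
noncomputable def pvec (e : ℕ → Γ) (a : MPAction Γ X μ) {n k : ℕ} (A : Fin k → Set X) :
    (Fin n × Fin k × Fin k) → ℝ :=
  fun pqr => (μ (a.act (e pqr.1.1) '' A pqr.2.1 ∩ A pqr.2.2)).toReal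

/-- The set of partition vectors, before taking closures. -/
noncomputable def rawSet (e : ℕ → Γ) (a : MPAction Γ X μ) (n k : ℕ) :
    Set ((Fin n × Fin k × Fin k) → ℝ) :=
  { v | ∃ A : Fin k → Set X, IsPartition A ∧ v = pvec e a (n := n) A }

lemma Cnk_eq (e : ℕ → Γ) (a : MPAction Γ X μ) (n k : ℕ) :
    Cnk e a n k = closure (rawSet e a n k) := by
  unfold Cnk rawSet
  have hset : {v : (Fin n × Fin k × Fin k) → ℝ | ∃ A : Fin k → Set X, IsPartition A ∧
      ∀ (p : Fin n) (q r : Fin k), v (p, q, r) = (μ (a.act (e p.1) '' A q ∩ A r)).toReal}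
      = {v | ∃ A : Fin k → Set X, IsPartition A ∧ v = pvec e a (n := n) A} := by
    ext v
    constructor
    · rintro ⟨A, hA, h⟩
      exact ⟨A, hA, funext fun pqr => by rcases pqr with ⟨p, q, r⟩; exact h p q r⟩
    · rintro ⟨A, hA, rfl⟩
      exact ⟨A, hA, fun p q r => rfl⟩
  rw [hset]

lemma rawSet_subset_box [IsProbabilityMeasure μ] (e : ℕ → Γ) (a : MPAction Γ X μ)
    (n k : ℕ) : rawSet e a n k ⊆ Metric.closedBall 0 1 := by
  rintro v ⟨A, hA, rfl⟩
  rw [mem_closedBall_zero_iff]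
  refine (pi_norm_le_iff_of_nonneg zero_le_one).2 fun i => ?_
  show ‖(μ (a.act (e i.1.1) '' A i.2.1 ∩ A i.2.2)).toReal‖ ≤ 1
  rw [Real.norm_eq_abs, abs_of_nonneg ENNReal.toReal_nonneg]
  have h1 : μ (a.act (e i.1.1) '' A i.2.1 ∩ A i.2.2) ≤ μ Set.univ :=
    measure_mono (Set.subset_univ _)
  have h2 := ENNReal.toReal_mono (by simp [measure_univ] : μ Set.univ ≠ ⊤) h1
  simpa [measure_univ] using h2

lemma IsPartition.preimage {W U : Type*} [MeasurableSpace W] [MeasurableSpace U]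
    {k : ℕ} {B : Fin k → Set U} (hB : IsPartition B) {ψ : W → U} (hψ : Measurable ψ) :
    IsPartition fun q => ψ ⁻¹' B q := by
  refine ⟨fun q => hψ (hB.1 q), fun q r hqr => (hB.2.1 hqr).preimage ψ, ?_⟩
  rw [← Set.preimage_iUnion, hB.2.2, Set.preimage_univ]

lemma glue_preimage₀ {W U : Type*} {ψ₀ ψ₁ : W → U} (hinj0 : Function.Injective ψ₀)
    (hdisj : ∀ x y, ψ₀ x ≠ ψ₁ y) (A C : Set W) :
    ψ₀ ⁻¹' (ψ₀ '' A ∪ ψ₁ '' C) = A := by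
  ext x
  simp only [Set.mem_preimage, Set.mem_union, Set.mem_image]
  constructor
  · rintro (⟨y, hy, h⟩ | ⟨y, hy, h⟩)
    · rwa [← hinj0 h]
    · exact absurd h.symm (hdisj x y)
  · intro hx
    exact Or.inl ⟨x, hx, rfl⟩

lemma isPartition_glue {W U : Type*} [MeasurableSpace W] [MeasurableSpace U]
    {ψ₀ ψ₁ : W → U} (hψ₀ : MeasurableEmbedding ψ₀) (hψ₁ : MeasurableEmbedding ψ₁)
    (hcover : ∀ u, (∃ x, ψ₀ x = u) ∨ (∃ x, ψ₁ x = u))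
    (hdisj : ∀ x y, ψ₀ x ≠ ψ₁ y)
    {k : ℕ} {A C : Fin k → Set W} (hA : IsPartition A) (hC : IsPartition C) :
    IsPartition (fun q => ψ₀ '' A q ∪ ψ₁ '' C q) := by
  refine ⟨fun q => (hψ₀.measurableSet_image' (hA.1 q)).union
      (hψ₁.measurableSet_image' (hC.1 q)), ?_, ?_⟩
  · intro q r hqr
    simp only [Function.onFun]
    rw [Set.disjoint_left]
    rintro u (⟨y, hy, rfl⟩ | ⟨y, hy, rfl⟩) (⟨z, hz, h⟩ | ⟨z, hz, h⟩)
    · exact (Set.disjoint_left.1 (hA.2.1 hqr) hy) ((hψ₀.injective h) ▸ hz)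
    · exact hdisj y z h.symm
    · exact hdisj z y h
    · exact (Set.disjoint_left.1 (hC.2.1 hqr) hy) ((hψ₁.injective h) ▸ hz)
  · ext u
    simp only [Set.mem_iUnion, Set.mem_union, Set.mem_image, Set.mem_univ, iff_true]
    rcases hcover u with ⟨x, rfl⟩ | ⟨x, rfl⟩
    · have hx : x ∈ ⋃ q, A q := by rw [hA.2.2]; trivial
      obtain ⟨q, hq⟩ := Set.mem_iUnion.1 hx
      exact ⟨q, Or.inl ⟨x, hq, rfl⟩⟩
    · have hx : x ∈ ⋃ q, C q := by rw [hC.2.2]; trivial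
      obtain ⟨q, hq⟩ := Set.mem_iUnion.1 hx
      exact ⟨q, Or.inr ⟨x, hq, rfl⟩⟩

lemma preimage_act_image {W U : Type*} [MeasurableSpace W] [MeasurableSpace U]
    {ρ : Measure W} {κ : Measure U}
    (d : MPAction Γ U κ) (a : MPAction Γ W ρ) {ψ₀ ψ₁ : W → U}
    (hcover : ∀ u, (∃ x, ψ₀ x = u) ∨ (∃ x, ψ₁ x = u))
    (hinj0 : Function.Injective ψ₀)
    (hdisj : ∀ x y, ψ₀ x ≠ ψ₁ y)
    (hequiv0 : ∀ γ x, d.act γ (ψ₀ x) = ψ₀ (a.act γ x))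
    (hequiv1 : ∀ γ x, ∃ z, d.act γ (ψ₁ x) = ψ₁ z)
    (γ : Γ) (B : Set U) : ψ₀ ⁻¹' (d.act γ '' B) = a.act γ '' (ψ₀ ⁻¹' B) := by
  ext x
  simp only [Set.mem_preimage, Set.mem_image]
  constructor
  · rintro ⟨u, hu, hux⟩
    rcases hcover u with ⟨y, rfl⟩ | ⟨y, rfl⟩
    · rw [hequiv0] at hux
      exact ⟨y, hu, hinj0 hux⟩
    · obtain ⟨z, hz⟩ := hequiv1 γ y
      rw [hz] at hux
      exact absurd hux.symm (hdisj x z)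
  · rintro ⟨y, hy, rfl⟩
    exact ⟨ψ₀ y, hy, hequiv0 γ y⟩

lemma pvec_decomp {W U : Type*} [MeasurableSpace W] [MeasurableSpace U]
    {ρ : Measure W} {κ : Measure U} [IsProbabilityMeasure ρ]
    (a c : MPAction Γ W ρ) (d : MPAction Γ U κ)
    {t : ℝ} (ht0 : 0 ≤ t) (ht1 : t ≤ 1)
    {ψ₀ ψ₁ : W → U}
    (hinj0 : Function.Injective ψ₀) (hinj1 : Function.Injective ψ₁)
    (hcover : ∀ u, (∃ x, ψ₀ x = u) ∨ (∃ x, ψ₁ x = u))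
    (hdisj : ∀ x y, ψ₀ x ≠ ψ₁ y)
    (hequiv0 : ∀ γ x, d.act γ (ψ₀ x) = ψ₀ (a.act γ x))
    (hequiv1 : ∀ γ x, d.act γ (ψ₁ x) = ψ₁ (c.act γ x))
    (hκ : ∀ T : Set U, MeasurableSet T →
      κ T = ENNReal.ofReal t * ρ (ψ₀ ⁻¹' T) + ENNReal.ofReal (1 - t) * ρ (ψ₁ ⁻¹' T))
    (e : ℕ → Γ) {n k : ℕ} (B : Fin k → Set U) (hB : IsPartition B) :
    pvec e d (n := n) B =
      t • pvec e a (fun q => ψ₀ ⁻¹' B q) + (1 - t) • pvec e c (fun q => ψ₁ ⁻¹' B q) := by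
  funext pqr
  obtain ⟨p, q, r⟩ := pqr
  have hmeasB : MeasurableSet (d.act (e p.1) '' B q ∩ B r) :=
    (measurableSet_act_image d _ (hB.1 q)).inter (hB.1 r)
  have him0 : ψ₀ ⁻¹' (d.act (e p.1) '' B q) = a.act (e p.1) '' (ψ₀ ⁻¹' B q) :=
    preimage_act_image d a hcover hinj0 hdisj hequiv0
      (fun γ x => ⟨c.act γ x, hequiv1 γ x⟩) _ _
  have him1 : ψ₁ ⁻¹' (d.act (e p.1) '' B q) = c.act (e p.1) '' (ψ₁ ⁻¹' B q) :=
    preimage_act_image d c (fun u => (hcover u).symm) hinj1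
      (fun x y h => hdisj y x h.symm) hequiv1
      (fun γ x => ⟨a.act γ x, hequiv0 γ x⟩) _ _
  show (κ (d.act (e p.1) '' B q ∩ B r)).toReal = _
  rw [hκ _ hmeasB, Set.preimage_inter, Set.preimage_inter, him0, him1,
    ENNReal.toReal_add (ENNReal.mul_ne_top ENNReal.ofReal_ne_top (measure_ne_top ρ _))
      (ENNReal.mul_ne_top ENNReal.ofReal_ne_top (measure_ne_top ρ _)),
    ENNReal.toReal_mul, ENNReal.toReal_mul, ENNReal.toReal_ofReal ht0,
    ENNReal.toReal_ofReal (by linarith : (0:ℝ) ≤ 1 - t)]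
  rfl

lemma rawSet_decomp {W U : Type*} [MeasurableSpace W] [MeasurableSpace U]
    {ρ : Measure W} {κ : Measure U} [IsProbabilityMeasure ρ]
    (a c : MPAction Γ W ρ) (d : MPAction Γ U κ)
    {t : ℝ} (ht0 : 0 ≤ t) (ht1 : t ≤ 1)
    {ψ₀ ψ₁ : W → U} (hψ₀ : MeasurableEmbedding ψ₀) (hψ₁ : MeasurableEmbedding ψ₁)
    (hcover : ∀ u, (∃ x, ψ₀ x = u) ∨ (∃ x, ψ₁ x = u))
    (hdisj : ∀ x y, ψ₀ x ≠ ψ₁ y)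
    (hequiv0 : ∀ γ x, d.act γ (ψ₀ x) = ψ₀ (a.act γ x))
    (hequiv1 : ∀ γ x, d.act γ (ψ₁ x) = ψ₁ (c.act γ x))
    (hκ : ∀ T : Set U, MeasurableSet T →
      κ T = ENNReal.ofReal t * ρ (ψ₀ ⁻¹' T) + ENNReal.ofReal (1 - t) * ρ (ψ₁ ⁻¹' T))
    (e : ℕ → Γ) (n k : ℕ) :
    rawSet e d n k =
      (fun uw : ((Fin n × Fin k × Fin k) → ℝ) × ((Fin n × Fin k × Fin k) → ℝ) =>
        t • uw.1 + (1 - t) • uw.2) '' (rawSet e a n k ×ˢ rawSet e c n k) := by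
  have hdec := pvec_decomp a c d ht0 ht1 hψ₀.injective hψ₁.injective hcover hdisj
    hequiv0 hequiv1 hκ e (n := n) (k := k)
  ext v
  constructor
  · rintro ⟨B, hB, rfl⟩
    refine ⟨(pvec e a fun q => ψ₀ ⁻¹' B q, pvec e c fun q => ψ₁ ⁻¹' B q),
      ⟨⟨_, hB.preimage hψ₀.measurable, rfl⟩, ⟨_, hB.preimage hψ₁.measurable, rfl⟩⟩,
      (hdec B hB).symm⟩
  · rintro ⟨⟨u, w⟩, ⟨⟨A, hA, rfl⟩, ⟨C, hC, rfl⟩⟩, rfl⟩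
    have hglue := isPartition_glue hψ₀ hψ₁ hcover hdisj hA hC
    refine ⟨fun q => ψ₀ '' A q ∪ ψ₁ '' C q, hglue, ?_⟩
    have e0 : (fun q => ψ₀ ⁻¹' (ψ₀ '' A q ∪ ψ₁ '' C q)) = A :=
      funext fun q => glue_preimage₀ hψ₀.injective hdisj _ _
    have e1 : (fun q => ψ₁ ⁻¹' (ψ₀ '' A q ∪ ψ₁ '' C q)) = C := funext fun q => by
      rw [Set.union_comm]
      exact glue_preimage₀ hψ₁.injective (fun x y h => hdisj y x h.symm) _ _
    rw [hdec _ hglue, e0, e1]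

lemma hausdorffDist_comb_le {E : Type*} [NormedAddCommGroup E] [NormedSpace ℝ E]
    {S T U : Set E} (hS : S.Nonempty) (hT : T.Nonempty)
    (hSb : IsBounded S) (hTb : IsBounded T) {t s : ℝ} (ht : 0 ≤ t) :
    hausdorffDist ((fun p : E × E => t • p.1 + s • p.2) '' (S ×ˢ U))
      ((fun p : E × E => t • p.1 + s • p.2) '' (T ×ˢ U)) ≤ t * hausdorffDist S T := by
  have fin : EMetric.hausdorffEdist S T ≠ ⊤ :=
    hausdorffEdist_ne_top_of_nonempty_of_bounded hS hT hSb hTb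
  set H := hausdorffDist S T with hHdef
  have hH0 : 0 ≤ H := hausdorffDist_nonneg
  have hdistc : ∀ (u v w : E), dist (t • u + s • w) (t • v + s • w) = t * dist u v := by
    intro u v w
    rw [dist_eq_norm, show (t • u + s • w) - (t • v + s • w) = t • (u - v) by
      rw [smul_sub]; abel, norm_smul, Real.norm_eq_abs, abs_of_nonneg ht, dist_eq_norm]
  have key : ∀ ε : ℝ, 0 < ε →
      hausdorffDist ((fun p : E × E => t • p.1 + s • p.2) '' (S ×ˢ U))
        ((fun p : E × E => t • p.1 + s • p.2) '' (T ×ˢ U)) ≤ t * H + ε := by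
    intro ε hε
    have hr : 0 ≤ t * H + ε := by positivity
    apply hausdorffDist_le_of_mem_dist hr
    · rintro x ⟨⟨u, w⟩, ⟨hu, hw⟩, rfl⟩
      obtain ⟨v, hv, hdist⟩ : ∃ v ∈ T, t * dist u v ≤ t * H + ε := by
        rcases eq_or_lt_of_le ht with h0 | h0
        · exact ⟨hT.choose, hT.choose_spec, by rw [← h0]; simpa using hε.le⟩
        · obtain ⟨v, hv, hlt⟩ := exists_dist_lt_of_hausdorffDist_lt hu
            (lt_add_of_pos_right H (div_pos hε h0)) fin
          refine ⟨v, hv, ?_⟩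
          have h1 := mul_le_mul_of_nonneg_left hlt.le ht
          rwa [mul_add, mul_div_cancel₀ _ (ne_of_gt h0)] at h1
      exact ⟨t • v + s • w, ⟨(v, w), ⟨hv, hw⟩, rfl⟩, by rw [hdistc]; exact hdist⟩
    · rintro y ⟨⟨v, w⟩, ⟨hv, hw⟩, rfl⟩
      obtain ⟨u, hu, hdist⟩ : ∃ u ∈ S, t * dist u v ≤ t * H + ε := by
        rcases eq_or_lt_of_le ht with h0 | h0
        · exact ⟨hS.choose, hS.choose_spec, by rw [← h0]; simpa using hε.le⟩
        · obtain ⟨u, hu, hlt⟩ := exists_dist_lt_of_hausdorffDist_lt' hv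
            (lt_add_of_pos_right H (div_pos hε h0)) fin
          refine ⟨u, hu, ?_⟩
          have h1 := mul_le_mul_of_nonneg_left hlt.le ht
          rwa [mul_add, mul_div_cancel₀ _ (ne_of_gt h0)] at h1
      refine ⟨t • u + s • w, ⟨(u, w), ⟨hu, hw⟩, rfl⟩, ?_⟩
      rw [dist_comm, hdistc]
      exact hdist
  by_contra hcon
  push_neg at hcon
  have h2 := key ((hausdorffDist ((fun p : E × E => t • p.1 + s • p.2) '' (S ×ˢ U))
      ((fun p : E × E => t • p.1 + s • p.2) '' (T ×ˢ U)) - t * H) / 2) (by linarith)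
  linarith

lemma comb_image_subset {E : Type*} [NormedAddCommGroup E] [NormedSpace ℝ E]
    {S U : Set E} (hS : S ⊆ Metric.closedBall 0 1) (hU : U ⊆ Metric.closedBall 0 1)
    {t : ℝ} (ht0 : 0 ≤ t) (ht1 : t ≤ 1) :
    (fun p : E × E => t • p.1 + (1 - t) • p.2) '' (S ×ˢ U) ⊆ Metric.closedBall 0 1 := by
  rintro x ⟨⟨u, w⟩, ⟨hu, hw⟩, rfl⟩
  have hu1 : ‖u‖ ≤ 1 := mem_closedBall_zero_iff.1 (hS hu)
  have hw1 : ‖w‖ ≤ 1 := mem_closedBall_zero_iff.1 (hU hw)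
  rw [mem_closedBall_zero_iff]
  calc ‖t • u + (1 - t) • w‖ ≤ ‖t • u‖ + ‖(1 - t) • w‖ := norm_add_le _ _
    _ = |t| * ‖u‖ + |1 - t| * ‖w‖ := by
        rw [norm_smul, norm_smul, Real.norm_eq_abs, Real.norm_eq_abs]
    _ ≤ 1 := by
        rw [abs_of_nonneg ht0, abs_of_nonneg (by linarith : (0:ℝ) ≤ 1 - t)]
        nlinarith [norm_nonneg u, norm_nonneg w]

lemma hausdorffDist_le_two {E : Type*} [NormedAddCommGroup E] {S T : Set E}
    (hS : S ⊆ Metric.closedBall 0 1) (hT : T ⊆ Metric.closedBall 0 1) :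
    hausdorffDist S T ≤ 2 := by
  rcases S.eq_empty_or_nonempty with rfl | hSne
  · rw [hausdorffDist_empty']; norm_num
  rcases T.eq_empty_or_nonempty with rfl | hTne
  · rw [hausdorffDist_empty]; norm_num
  have hd : ∀ x ∈ Metric.closedBall (0:E) 1, ∀ y ∈ Metric.closedBall (0:E) 1,
      dist x y ≤ 2 := by
    intro x hx y hy
    rw [Metric.mem_closedBall] at hx hy
    calc dist x y ≤ dist x 0 + dist 0 y := dist_triangle _ _ _
      _ = dist x 0 + dist y 0 := by rw [dist_comm (0:E) y]
      _ ≤ 2 := by linarith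
  apply hausdorffDist_le_of_mem_dist (by norm_num)
  · intro x hx
    exact ⟨hTne.choose, hTne.choose_spec, hd x (hS hx) _ (hT hTne.choose_spec)⟩
  · intro y hy
    refine ⟨hSne.choose, hSne.choose_spec, ?_⟩
    rw [dist_comm]
    exact hd _ (hS hSne.choose_spec) y (hT hy)

lemma dWE_comb_le {W : Type*} [MeasurableSpace W] {ρ : Measure W} [IsProbabilityMeasure ρ]
    {U₁ U₂ : Type*} [MeasurableSpace U₁] [MeasurableSpace U₂]
    {κ₁ : Measure U₁} {κ₂ : Measure U₂}
    (a b c : MPAction Γ W ρ) (d₁ : MPAction Γ U₁ κ₁) (d₂ : MPAction Γ U₂ κ₂)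
    {t : ℝ} (ht0 : 0 ≤ t) (ht1 : t ≤ 1) (e : ℕ → Γ)
    (h₁ : ∀ n k : ℕ, rawSet e d₁ n k =
      (fun uw : ((Fin n × Fin k × Fin k) → ℝ) × ((Fin n × Fin k × Fin k) → ℝ) =>
        t • uw.1 + (1 - t) • uw.2) '' (rawSet e a n k ×ˢ rawSet e c n k))
    (h₂ : ∀ n k : ℕ, rawSet e d₂ n k =
      (fun uw : ((Fin n × Fin k × Fin k) → ℝ) × ((Fin n × Fin k × Fin k) → ℝ) =>
        t • uw.1 + (1 - t) • uw.2) '' (rawSet e b n k ×ˢ rawSet e c n k)) :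
    dWE e d₁ d₂ ≤ t * dWE e a b := by
  have hterm : ∀ n k : ℕ, hausdorffDist (Cnk e d₁ n k) (Cnk e d₂ n k) ≤
      t * hausdorffDist (Cnk e a n k) (Cnk e b n k) := by
    intro n k
    rw [Cnk_eq, Cnk_eq, Cnk_eq, Cnk_eq, hausdorffDist_closure, hausdorffDist_closure,
      h₁ n k, h₂ n k]
    rcases Set.eq_empty_or_nonempty (rawSet e a n k) with hSa | hSa
    · have hSb : rawSet e b n k = ∅ := by
        rcases Set.eq_empty_or_nonempty (rawSet e b n k) with h | h
        · exact h
        · exfalso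
          obtain ⟨v, A, hA, rfl⟩ := h
          have hmem : pvec e a (n := n) A ∈ rawSet e a n k := ⟨A, hA, rfl⟩
          rw [hSa] at hmem
          exact hmem
      rw [hSa, hSb, Set.empty_prod, Set.image_empty]
      simp only [hausdorffDist_empty', hausdorffDist_empty]
      positivity
    rcases Set.eq_empty_or_nonempty (rawSet e c n k) with hSc | hSc
    · rw [hSc, Set.prod_empty, Set.image_empty]
      simp only [hausdorffDist_empty', hausdorffDist_empty]
      exact mul_nonneg ht0 hausdorffDist_nonneg
    · have hSb : (rawSet e b n k).Nonempty := by
        obtain ⟨v, A, hA, rfl⟩ := hSa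
        exact ⟨pvec e b A, A, hA, rfl⟩
      exact hausdorffDist_comb_le hSa hSb
        (Metric.isBounded_closedBall.subset (rawSet_subset_box e a n k))
        (Metric.isBounded_closedBall.subset (rawSet_subset_box e b n k)) ht0
  have hball_d₁ : ∀ n k : ℕ, Cnk e d₁ n k ⊆ Metric.closedBall 0 1 := by
    intro n k
    rw [Cnk_eq, h₁ n k]
    exact closure_minimal
      (comb_image_subset (rawSet_subset_box e a n k) (rawSet_subset_box e c n k) ht0 ht1)
      Metric.isClosed_closedBall
  have hball_d₂ : ∀ n k : ℕ, Cnk e d₂ n k ⊆ Metric.closedBall 0 1 := by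
    intro n k
    rw [Cnk_eq, h₂ n k]
    exact closure_minimal
      (comb_image_subset (rawSet_subset_box e b n k) (rawSet_subset_box e c n k) ht0 ht1)
      Metric.isClosed_closedBall
  have hball_a : ∀ n k : ℕ, Cnk e a n k ⊆ Metric.closedBall 0 1 := fun n k => by
    rw [Cnk_eq]
    exact closure_minimal (rawSet_subset_box e a n k) Metric.isClosed_closedBall
  have hball_b : ∀ n k : ℕ, Cnk e b n k ⊆ Metric.closedBall 0 1 := fun n k => by
    rw [Cnk_eq]
    exact closure_minimal (rawSet_subset_box e b n k) Metric.isClosed_closedBall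
  have hnonneg2 : ∀ nk : ℕ × ℕ, (0:ℝ) ≤ 2 ^ (-(nk.1:ℤ) - (nk.2:ℤ)) := fun nk => by positivity
  have hgeo : Summable (fun nk : ℕ × ℕ => (2:ℝ) ^ (-(nk.1:ℤ) - (nk.2:ℤ))) := by
    have h2 : Summable (fun n : ℕ => (2:ℝ) ^ (-(n:ℤ))) := by
      refine (summable_geometric_of_lt_one (by norm_num : (0:ℝ) ≤ 1/2)
        (by norm_num : (1:ℝ)/2 < 1)).congr fun n => ?_
      rw [one_div, inv_pow, ← zpow_natCast (2:ℝ), ← zpow_neg]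
    refine (h2.mul_of_nonneg h2 (fun n => by positivity) (fun n => by positivity)).congr
      fun nk => ?_
    rw [sub_eq_add_neg, zpow_add₀ (by norm_num : (2:ℝ) ≠ 0)]
  have hf : Summable (fun nk : ℕ × ℕ => (2:ℝ) ^ (-(nk.1:ℤ) - (nk.2:ℤ)) *
      hausdorffDist (Cnk e d₁ nk.1 nk.2) (Cnk e d₂ nk.1 nk.2)) := by
    refine Summable.of_nonneg_of_le
      (fun nk => mul_nonneg (hnonneg2 nk) hausdorffDist_nonneg)
      (fun nk => ?_) (hgeo.mul_right 2)
    exact mul_le_mul_of_nonneg_left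
      (hausdorffDist_le_two (hball_d₁ nk.1 nk.2) (hball_d₂ nk.1 nk.2)) (hnonneg2 nk)
  have hg : Summable (fun nk : ℕ × ℕ => (2:ℝ) ^ (-(nk.1:ℤ) - (nk.2:ℤ)) *
      hausdorffDist (Cnk e a nk.1 nk.2) (Cnk e b nk.1 nk.2)) := by
    refine Summable.of_nonneg_of_le
      (fun nk => mul_nonneg (hnonneg2 nk) hausdorffDist_nonneg)
      (fun nk => ?_) (hgeo.mul_right 2)
    exact mul_le_mul_of_nonneg_left
      (hausdorffDist_le_two (hball_a nk.1 nk.2) (hball_b nk.1 nk.2)) (hnonneg2 nk)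
  unfold dWE
  calc (∑' nk : ℕ × ℕ, (2:ℝ) ^ (-(nk.1:ℤ) - (nk.2:ℤ)) *
        hausdorffDist (Cnk e d₁ nk.1 nk.2) (Cnk e d₂ nk.1 nk.2))
      ≤ ∑' nk : ℕ × ℕ, t * ((2:ℝ) ^ (-(nk.1:ℤ) - (nk.2:ℤ)) *
        hausdorffDist (Cnk e a nk.1 nk.2) (Cnk e b nk.1 nk.2)) := by
        refine Summable.tsum_le_tsum (fun nk => ?_) hf (hg.mul_left t)
        rw [mul_left_comm]
        exact mul_le_mul_of_nonneg_left (hterm nk.1 nk.2) (hnonneg2 nk)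
    _ = t * ∑' nk : ℕ × ℕ, (2:ℝ) ^ (-(nk.1:ℤ) - (nk.2:ℤ)) *
        hausdorffDist (Cnk e a nk.1 nk.2) (Cnk e b nk.1 nk.2) := tsum_mul_left

section SigmaLemmas

variable {ι : Type*} {Z : ι → Type*} [∀ i, MeasurableSpace (Z i)]

lemma measurableSet_sigma_iff {S : Set ((i : ι) × Z i)} :
    MeasurableSet S ↔ ∀ i, MeasurableSet (Sigma.mk i ⁻¹' S) := by
  constructor
  · exact fun h i => measurable_sigmaMk' i h
  · intro h
    rw [Sigma.instMeasurableSpace, MeasurableSpace.measurableSet_iInf]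
    exact h

lemma measurableEmbedding_sigmaMk (i : ι) : MeasurableEmbedding (@Sigma.mk ι Z i) := by
  refine ⟨sigma_mk_injective, measurable_sigmaMk' i, fun S hS => ?_⟩
  rw [measurableSet_sigma_iff]
  intro j
  by_cases h : j = i
  · subst h
    rwa [Function.Injective.preimage_image sigma_mk_injective]
  · convert MeasurableSet.empty
    ext x
    simp only [Set.mem_preimage, Set.mem_image, Set.mem_empty_iff_false, iff_false]
    rintro ⟨y, hy, hxy⟩
    exact h (congrArg Sigma.fst hxy).symm

end SigmaLemmas

lemma smul_prod_helper {α β : Type*} [MeasurableSpace α] [MeasurableSpace β]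
    (c : ENNReal) (ν : Measure α) (μ : Measure β) [SFinite μ] :
    (c • ν).prod μ = c • (ν.prod μ) := by
  ext s hs
  simp only [Measure.prod_apply hs, Measure.smul_apply, lintegral_smul_measure, smul_eq_mul]

lemma mixMeasure_fin2_apply (t : ℝ) {W : Type*} [MeasurableSpace W] (μ : Measure W)
    {T : Set ((_ : Fin 2) × W)} (hT : MeasurableSet T) :
    mixMeasure ![t, 1 - t] (fun _ => μ) T
      = ENNReal.ofReal t * μ (Sigma.mk (β := fun _ : Fin 2 => W) 0 ⁻¹' T)
        + ENNReal.ofReal (1 - t) * μ (Sigma.mk (β := fun _ : Fin 2 => W) 1 ⁻¹' T) := by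
  rw [mixMeasure, Measure.sum_apply _ hT, tsum_fintype, Fin.sum_univ_two]
  simp only [Measure.smul_apply, smul_eq_mul, Matrix.cons_val_zero, Matrix.cons_val_one,
    Matrix.head_cons]
  rw [Measure.map_apply (measurable_sigmaMk' 0) hT, Measure.map_apply (measurable_sigmaMk' 1) hT]

lemma mixProdMeasure_apply (t : ℝ) {W : Type*} [MeasurableSpace W] (μ : Measure W)
    [SFinite μ] {Y : Type*} [MeasurableSpace Y] (ν : Measure Y) [SFinite ν]
    {T : Set (((_ : Fin 2) × W) × Y)} (hT : MeasurableSet T) :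
    ((mixMeasure ![t, 1 - t] fun _ => μ).prod ν) T
      = ENNReal.ofReal t * (μ.prod ν)
          ((fun x : W × Y => ((Sigma.mk (β := fun _ : Fin 2 => W) 0 x.1), id x.2)) ⁻¹' T)
        + ENNReal.ofReal (1 - t) * (μ.prod ν)
          ((fun x : W × Y => ((Sigma.mk (β := fun _ : Fin 2 => W) 1 x.1), id x.2)) ⁻¹' T) := by
  have hmap : ∀ i : Fin 2,
      (μ.map (Sigma.mk (β := fun _ : Fin 2 => W) i)).prod ν
        = (μ.prod ν).map (Prod.map (Sigma.mk i) id) := by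
    intro i
    have h := Measure.map_prod_map (f := Sigma.mk (β := fun _ : Fin 2 => W) i)
      (g := (id : Y → Y)) μ ν (measurable_sigmaMk' i) measurable_id
    rw [Measure.map_id] at h
    exact h
  rw [mixMeasure, Measure.prod_sum_left, Measure.sum_apply _ hT, tsum_fintype,
    Fin.sum_univ_two]
  rw [smul_prod_helper, smul_prod_helper]
  simp only [Measure.smul_apply, smul_eq_mul, Matrix.cons_val_zero, Matrix.cons_val_one,
    Matrix.head_cons]
  rw [hmap 0, hmap 1,
    Measure.map_apply ((measurable_sigmaMk' 0).prodMap measurable_id) hT,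
    Measure.map_apply ((measurable_sigmaMk' 1).prodMap measurable_id) hT]
  have hpre : ∀ i : Fin 2,
      Prod.map (Sigma.mk (β := fun _ : Fin 2 => W) i) id ⁻¹' T
        = (fun x : W × Y => ((Sigma.mk (β := fun _ : Fin 2 => W) i x.1), id x.2)) ⁻¹' T := by
    intro i
    ext x
    rcases x with ⟨x1, x2⟩
    rfl
  rw [hpre 0, hpre 1]

end MPAction

end AuxProof

/-- For all measure-preserving actions `a, b, c` of a countable group `Γ` on
a standard probability space `(X,μ)` and all `t ∈ [0,1]`:
`d(t a + (1−t) c, t b + (1−t) c) ≤ t·d(a,b)`, and likewise for the metric `d_s`. -/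
theorem dWE_convComb_le
    (Γ : Type) [Group Γ] [Countable Γ]
    (X : Type) [MeasurableSpace X] [StandardBorelSpace X]
    (μ : Measure X) [IsProbabilityMeasure μ] [NullSingletonClass μ]
    (e : ℕ → Γ) (he : Function.Surjective e)
    (a b c : MPAction Γ X μ) (t : ℝ) (ht : t ∈ Set.Icc (0:ℝ) 1) :
    MPAction.dWE e (MPAction.convComb t a c) (MPAction.convComb t b c) ≤
        t * MPAction.dWE e a b
    ∧ MPAction.dS μ e (MPAction.convComb t a c) (MPAction.convComb t b c) ≤
        t * MPAction.dS μ e a b := by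
  obtain ⟨ht0, ht1⟩ := ht
  have hcover : ∀ u : (_ : Fin 2) × X,
      (∃ x, (Sigma.mk 0 x : (_ : Fin 2) × X) = u) ∨
      (∃ x, (Sigma.mk 1 x : (_ : Fin 2) × X) = u) := by
    rintro ⟨i, x⟩
    fin_cases i
    · exact Or.inl ⟨x, rfl⟩
    · exact Or.inr ⟨x, rfl⟩
  have hdisj : ∀ x y : X, (Sigma.mk 0 x : (_ : Fin 2) × X) ≠ Sigma.mk 1 y := by
    intro x y h
    have h0 : (0 : Fin 2) = 1 := congrArg Sigma.fst h
    exact absurd h0 (by decide)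
  have hequiv : ∀ (p q : MPAction Γ X μ) (γ : Γ) (x : X),
      (MPAction.convComb t p q).act γ (Sigma.mk 0 x) = Sigma.mk 0 (p.act γ x) :=
    fun p q γ x => rfl
  have hequiv' : ∀ (p q : MPAction Γ X μ) (γ : Γ) (x : X),
      (MPAction.convComb t p q).act γ (Sigma.mk 1 x) = Sigma.mk 1 (q.act γ x) :=
    fun p q γ x => rfl
  constructor
  · exact MPAction.dWE_comb_le a b c _ _ ht0 ht1 e
      (fun n k => MPAction.rawSet_decomp a c _ ht0 ht1
        (MPAction.measurableEmbedding_sigmaMk 0) (MPAction.measurableEmbedding_sigmaMk 1)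
        hcover hdisj (hequiv a c) (hequiv' a c)
        (fun T hT => MPAction.mixMeasure_fin2_apply t μ hT) e n k)
      (fun n k => MPAction.rawSet_decomp b c _ ht0 ht1
        (MPAction.measurableEmbedding_sigmaMk 0) (MPAction.measurableEmbedding_sigmaMk 1)
        hcover hdisj (hequiv b c) (hequiv' b c)
        (fun T hT => MPAction.mixMeasure_fin2_apply t μ hT) e n k)
  · show MPAction.dWE e
        (MPAction.prodAction (MPAction.convComb t a c) (MPAction.trivAction Γ X μ))
        (MPAction.prodAction (MPAction.convComb t b c) (MPAction.trivAction Γ X μ)) ≤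
      t * MPAction.dWE e (MPAction.prodAction a (MPAction.trivAction Γ X μ))
        (MPAction.prodAction b (MPAction.trivAction Γ X μ))
    have hcover2 : ∀ u : ((_ : Fin 2) × X) × X,
        (∃ x : X × X, (fun w : X × X =>
          ((Sigma.mk (β := fun _ : Fin 2 => X) 0 w.1), id w.2)) x = u) ∨
        (∃ x : X × X, (fun w : X × X =>
          ((Sigma.mk (β := fun _ : Fin 2 => X) 1 w.1), id w.2)) x = u) := by
      rintro ⟨⟨i, x⟩, y⟩
      fin_cases i
      · exact Or.inl ⟨(x, y), rfl⟩
      · exact Or.inr ⟨(x, y), rfl⟩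
    have hdisj2 : ∀ x y : X × X,
        (fun w : X × X => ((Sigma.mk (β := fun _ : Fin 2 => X) 0 w.1), id w.2)) x ≠
        (fun w : X × X => ((Sigma.mk (β := fun _ : Fin 2 => X) 1 w.1), id w.2)) y := by
      intro x y h
      have h0 : (0 : Fin 2) = 1 := congrArg (fun z => z.1.1) h
      exact absurd h0 (by decide)
    have hequiv2 : ∀ (p q : MPAction Γ X μ) (γ : Γ) (x : X × X),
        (MPAction.prodAction (MPAction.convComb t p q) (MPAction.trivAction Γ X μ)).act γ
            ((fun w : X × X => ((Sigma.mk (β := fun _ : Fin 2 => X) 0 w.1), id w.2)) x)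
          = (fun w : X × X => ((Sigma.mk (β := fun _ : Fin 2 => X) 0 w.1), id w.2))
            ((MPAction.prodAction p (MPAction.trivAction Γ X μ)).act γ x) := by
      intro p q γ x
      rcases x with ⟨x1, x2⟩
      rfl
    have hequiv2' : ∀ (p q : MPAction Γ X μ) (γ : Γ) (x : X × X),
        (MPAction.prodAction (MPAction.convComb t p q) (MPAction.trivAction Γ X μ)).act γ
            ((fun w : X × X => ((Sigma.mk (β := fun _ : Fin 2 => X) 1 w.1), id w.2)) x)
          = (fun w : X × X => ((Sigma.mk (β := fun _ : Fin 2 => X) 1 w.1), id w.2))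
            ((MPAction.prodAction q (MPAction.trivAction Γ X μ)).act γ x) := by
      intro p q γ x
      rcases x with ⟨x1, x2⟩
      rfl
    have hemb0 : MeasurableEmbedding
        (fun w : X × X => ((Sigma.mk (β := fun _ : Fin 2 => X) 0 w.1), id w.2)) :=
      (MPAction.measurableEmbedding_sigmaMk (Z := fun _ : Fin 2 => X) 0).prodMap
        (MeasurableEmbedding.id (α := X))
    have hemb1 : MeasurableEmbedding
        (fun w : X × X => ((Sigma.mk (β := fun _ : Fin 2 => X) 1 w.1), id w.2)) :=
      (MPAction.measurableEmbedding_sigmaMk (Z := fun _ : Fin 2 => X) 1).prodMap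
        (MeasurableEmbedding.id (α := X))
    exact MPAction.dWE_comb_le
      (MPAction.prodAction a (MPAction.trivAction Γ X μ))
      (MPAction.prodAction b (MPAction.trivAction Γ X μ))
      (MPAction.prodAction c (MPAction.trivAction Γ X μ)) _ _ ht0 ht1 e
      (fun n k => MPAction.rawSet_decomp _ _ _ ht0 ht1 hemb0 hemb1
        hcover2 hdisj2 (hequiv2 a c) (hequiv2' a c)
        (fun T hT => MPAction.mixProdMeasure_apply t μ μ hT) e n k)
      (fun n k => MPAction.rawSet_decomp _ _ _ ht0 ht1 hemb0 hemb1
        hcover2 hdisj2 (hequiv2 b c) (hequiv2' b c)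
        (fun T hT => MPAction.mixProdMeasure_apply t μ μ hT) e n k)
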